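/- There exists a constant C > 0 such that for all λ ∈ (0,1) and all p ∈ ℝ, both ℰ_λ(p) ≤ (1/(8(λ+1)))·(1 + C·λ·|p|) and λ·|p| ≤ C·ℰ_λ(p) hold. -/

import Mathlib

open MeasureTheory Real

/-- The jump rate kernel `𝒥_λ(p,p')`. -/
noncomputable def Jker (lam p p' : ℝ) : ℝ :=
  ((1 + lam) / 64) * |p' - p| *
    Real.exp (-(1/2) * ((1 - lam)/2 * p - (1 + lam)/2 * p')^2)

/-- The Hamiltonian `H(x,p) = p²/2 + V(x)`. -/
noncomputable def Ham (V : ℝ → ℝ) (x p : ℝ) : ℝ := p^2 / 2 + V x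

/-- The escape rate `ℰ_λ(p)`. -/
noncomputable def Erate (lam p : ℝ) : ℝ := ∫ p' : ℝ, Jker lam p p'

/-- `G m = ∫ |u - m| e^{-u²/2} du`. -/
noncomputable def Gint (m : ℝ) : ℝ := ∫ u : ℝ, |u - m| * Real.exp (-(1/2) * u^2)

lemma integrable_gauss : Integrable (fun u : ℝ => Real.exp (-(1/2) * u^2)) :=
  integrable_exp_neg_mul_sq (by norm_num)

lemma integrable_abs_gauss : Integrable (fun u : ℝ => |u| * Real.exp (-(1/2) * u^2)) := by
  have h := (integrable_mul_exp_neg_mul_sq (show (0:ℝ) < 1/2 by norm_num)).abs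
  simpa [abs_mul, abs_of_pos (Real.exp_pos _)] using h

lemma integrable_G (m : ℝ) :
    Integrable (fun u : ℝ => |u - m| * Real.exp (-(1/2) * u^2)) := by
  apply Integrable.mono' (integrable_abs_gauss.add (integrable_gauss.const_mul |m|))
  · exact ((continuous_id.sub continuous_const).abs.mul
      (Real.continuous_exp.comp (by continuity))).aestronglyMeasurable
  · filter_upwards with u
    have h1 : |u - m| ≤ |u| + |m| := abs_sub u m
    have h2 : (0:ℝ) < Real.exp (-(1/2) * u^2) := Real.exp_pos _
    rw [Real.norm_eq_abs, abs_mul, abs_of_pos h2, abs_abs]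
    simp only [Pi.add_apply]
    nlinarith

lemma gauss_val : ∫ u : ℝ, Real.exp (-(1/2) * u^2) = Real.sqrt (2 * π) := by
  rw [integral_gaussian, show π / (1/2 : ℝ) = 2 * π by ring]

lemma ioi_val : ∫ u in Set.Ioi (0:ℝ), u * Real.exp (-(1/2) * u^2) = 1 := by
  have hderiv : ∀ x ∈ Set.Ici (0:ℝ),
      HasDerivAt (fun u : ℝ => -Real.exp (-(1/2) * u^2))
        (x * Real.exp (-(1/2) * x^2)) x := by
    intro x _
    have h : HasDerivAt (fun u : ℝ => -(1/2) * u^2) (-x) x := by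
      have := (hasDerivAt_pow 2 x).const_mul (-(1/2) : ℝ)
      simpa using this.congr_deriv (by ring)
    simpa [mul_comm] using (h.exp).fun_neg
  have hint : IntegrableOn (fun u : ℝ => u * Real.exp (-(1/2) * u^2)) (Set.Ioi 0) :=
    (integrable_mul_exp_neg_mul_sq (show (0:ℝ) < 1/2 by norm_num)).integrableOn
  have htend : Filter.Tendsto (fun x : ℝ => -Real.exp (-(1/2) * x^2)) Filter.atTop (nhds 0) := by
    rw [show (0:ℝ) = -0 by ring]
    apply Filter.Tendsto.neg
    apply Real.tendsto_exp_atBot.comp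
    have h2 : Filter.Tendsto (fun x : ℝ => x^2) Filter.atTop Filter.atTop :=
      Filter.tendsto_pow_atTop two_ne_zero
    exact Filter.Tendsto.const_mul_atTop_of_neg (by norm_num) h2
  have := integral_Ioi_of_hasDerivAt_of_tendsto' hderiv hint htend
  rw [this]; norm_num

lemma abs_val : ∫ u : ℝ, |u| * Real.exp (-(1/2) * u^2) = 2 := by
  have hsplit := intervalIntegral.integral_Iic_add_Ioi (b := (0:ℝ))
    (integrable_abs_gauss.integrableOn) (integrable_abs_gauss.integrableOn)
  have hIic : ∫ u in Set.Iic (0:ℝ), |u| * Real.exp (-(1/2) * u^2)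
      = ∫ u in Set.Ioi (0:ℝ), |u| * Real.exp (-(1/2) * u^2) := by
    have h := integral_comp_neg_Iic (0:ℝ) (fun u : ℝ => |u| * Real.exp (-(1/2) * u^2))
    simp only [abs_neg, neg_sq, neg_zero] at h
    exact h
  have hIoi : ∫ u in Set.Ioi (0:ℝ), |u| * Real.exp (-(1/2) * u^2)
      = ∫ u in Set.Ioi (0:ℝ), u * Real.exp (-(1/2) * u^2) := by
    apply setIntegral_congr_fun measurableSet_Ioi
    intro x hx
    simp only
    rw [abs_of_pos hx]
  rw [← hsplit, hIic, hIoi, ioi_val]; norm_num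

lemma Gint_upper (m : ℝ) : Gint m ≤ 2 + Real.sqrt (2 * π) * |m| := by
  have h : Gint m ≤ ∫ u : ℝ, (|u| * Real.exp (-(1/2) * u^2) + |m| * Real.exp (-(1/2) * u^2)) := by
    apply integral_mono (integrable_G m) (integrable_abs_gauss.add (integrable_gauss.const_mul |m|))
    intro u
    have h1 : |u - m| ≤ |u| + |m| := abs_sub u m
    have h2 : (0:ℝ) < Real.exp (-(1/2) * u^2) := Real.exp_pos _
    simp only [Pi.add_apply]
    nlinarith
  rw [integral_add integrable_abs_gauss (integrable_gauss.const_mul |m|),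
    abs_val, integral_const_mul, gauss_val] at h
  linarith [h]

lemma Gint_neg (m : ℝ) : Gint (-m) = Gint m := by
  unfold Gint
  rw [← integral_neg_eq_self (fun u : ℝ => |u - m| * Real.exp (-(1/2) * u^2))]
  congr 1
  ext u
  rw [show -u - m = -(u - -m) by ring, abs_neg, neg_sq]

lemma Gint_nonneg (m : ℝ) : 0 ≤ Gint m :=
  integral_nonneg fun u => mul_nonneg (abs_nonneg _) (Real.exp_pos _).le

lemma Gint_lower_nonneg (m : ℝ) (hm : 0 ≤ m) : m / 2 ≤ Gint m := by
  have hsub : m / 2 * 1 ≤ ∫ u in Set.Icc (-1:ℝ) 0, |u - m| * Real.exp (-(1/2) * u^2) := by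
    have hvol : (volume (Set.Icc (-1:ℝ) 0)).toReal = 1 := by
      simp [Real.volume_Icc]
    have hconst : ∫ _ in Set.Icc (-1:ℝ) 0, (m/2 : ℝ) = m/2 * 1 := by
      rw [setIntegral_const, measureReal_def, hvol]; simp
    rw [← hconst]
    apply setIntegral_mono_on (integrableOn_const (by simp [Real.volume_Icc]))
      ((integrable_G m).integrableOn) measurableSet_Icc
    intro u hu
    obtain ⟨hu1, hu2⟩ := hu
    have habs : m ≤ |u - m| := by
      rw [abs_of_nonpos (by linarith)]; linarith
    have hexp : (1:ℝ)/2 ≤ Real.exp (-(1/2) * u^2) := by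
      have := Real.add_one_le_exp (-(1/2) * u^2)
      nlinarith
    nlinarith [abs_nonneg (u - m)]
  have hrest : ∫ u in Set.Icc (-1:ℝ) 0, |u - m| * Real.exp (-(1/2) * u^2) ≤ Gint m := by
    apply setIntegral_le_integral (integrable_G m)
    filter_upwards with u
    exact mul_nonneg (abs_nonneg _) (Real.exp_pos _).le
  calc m / 2 = m / 2 * 1 := by ring
    _ ≤ _ := hsub
    _ ≤ Gint m := hrest

lemma Gint_lower (m : ℝ) : |m| / 2 ≤ Gint m := by
  rcases abs_cases m with ⟨h, h'⟩ | ⟨h, h'⟩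
  · rw [h]; exact Gint_lower_nonneg m h'
  · rw [h, ← Gint_neg m]; exact Gint_lower_nonneg (-m) (by linarith)

lemma Erate_eq (lam p : ℝ) (h0 : 0 < lam) :
    Erate lam p = (1 / (16 * (1 + lam))) * Gint (lam * p) := by
  have hb : (0:ℝ) < (1 + lam) / 2 := by linarith
  set b : ℝ := (1 + lam) / 2 with hbdef
  set c : ℝ := -((1 - lam) / 2 * p) with hcdef
  have key : ∀ p' : ℝ, Jker lam p p'
      = ((1 + lam) / 64) * (b⁻¹ *
        (|b * p' + c - lam * p| * Real.exp (-(1/2) * (b * p' + c)^2))) := by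
    intro p'
    have e1 : |b * p' + c - lam * p| = b * |p' - p| := by
      rw [show b * p' + c - lam * p = b * (p' - p) by rw [hbdef, hcdef]; ring,
        abs_mul, abs_of_pos hb]
    have e2 : ((1 - lam)/2 * p - (1 + lam)/2 * p')^2 = (b * p' + c)^2 := by
      rw [hbdef, hcdef]; ring
    unfold Jker
    rw [e1, e2]
    field_simp
  unfold Erate
  simp_rw [key]
  rw [integral_const_mul, integral_const_mul]
  have comp : (∫ p' : ℝ, |b * p' + c - lam * p| * Real.exp (-(1/2) * (b * p' + c)^2))
      = b⁻¹ * Gint (lam * p) := by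
    have step1 := MeasureTheory.Measure.integral_comp_mul_left
      (fun y : ℝ => |y + c - lam * p| * Real.exp (-(1/2) * (y + c)^2)) b
    have step2 := MeasureTheory.integral_add_right_eq_self (μ := volume)
      (fun u : ℝ => |u - lam * p| * Real.exp (-(1/2) * u^2)) c
    rw [step1, abs_of_pos (inv_pos.2 hb), smul_eq_mul]
    congr 1

  rw [comp]
  unfold Gint
  rw [hbdef]
  field_simp
  ring

lemma sqrt_two_pi_le : Real.sqrt (2 * π) ≤ 3 := by
  rw [show (3:ℝ) = Real.sqrt (3^2) from (Real.sqrt_sq (by norm_num)).symm]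
  apply Real.sqrt_le_sqrt
  nlinarith [Real.pi_le_four]

theorem stmt5 :
    ∃ C > 0, ∀ lam ∈ Set.Ioo (0:ℝ) 1, ∀ p : ℝ,
      Erate lam p ≤ (1 / (8 * (lam + 1))) * (1 + C * lam * |p|) ∧
      lam * |p| ≤ C * Erate lam p := by
  refine ⟨64, by norm_num, ?_⟩
  rintro lam ⟨h0, h1⟩ p
  have habs : |lam * p| = lam * |p| := by rw [abs_mul, abs_of_pos h0]
  have hE := Erate_eq lam p h0
  have hGu := Gint_upper (lam * p)
  have hGl := Gint_lower (lam * p)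
  have hGn := Gint_nonneg (lam * p)
  have hlp : (0:ℝ) ≤ lam * |p| := mul_nonneg h0.le (abs_nonneg p)
  have hs := sqrt_two_pi_le
  have hss : (0:ℝ) ≤ Real.sqrt (2 * π) := Real.sqrt_nonneg _
  have hpos : (0:ℝ) < 1 + lam := by linarith
  constructor
  · rw [hE]
    rw [show (1:ℝ) / (8 * (lam + 1)) * (1 + 64 * lam * |p|)
        = (1 / (16 * (1 + lam))) * (2 + 128 * (lam * |p|)) by field_simp; ring]
    apply mul_le_mul_of_nonneg_left _ (by positivity)
    calc Gint (lam * p) ≤ 2 + Real.sqrt (2 * π) * |lam * p| := hGu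
      _ = 2 + Real.sqrt (2 * π) * (lam * |p|) := by rw [habs]
      _ ≤ 2 + 128 * (lam * |p|) := by nlinarith
  · rw [hE, habs] at *
    rw [show (64:ℝ) * ((1 / (16 * (1 + lam))) * Gint (lam * p))
        = (4 / (1 + lam)) * Gint (lam * p) by field_simp; ring]
    have h2 : (2:ℝ) ≤ 4 / (1 + lam) := by
      rw [le_div_iff₀ hpos]; linarith
    calc lam * |p| ≤ 2 * Gint (lam * p) := by linarith
      _ ≤ (4 / (1 + lam)) * Gint (lam * p) := mul_le_mul_of_nonneg_right h2 hGn
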